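/- Fix L ≥ 1, N = 4^L, M ≥ 1 and widths r₀,…,r_{L−1} ≥ 1, and let A(w) denote the deep convolutional arithmetic circuit coefficient tensor determined by the weight vector w consisting of all entries of a^{0,α} (α ∈ [r₀]), a^l (l = 1,…,L−1) and a^L. Then for any partition of Fin N into disjoint subsets I and J with I ∪ J = univ, the function w ↦ rank ⟦A(w)⟧_{I,J} attains its maximum value almost everywhere: the set of weight vectors w at which rank ⟦A(w)⟧_{I,J} is strictly smaller than its maximum over all weight vectors has Lebesgue measure zero. -/

import Mathlib

open MeasureTheory

noncomputable section

/-- Matricization of a tensor `A` of order `N` and dimension `M` in each mode, with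
respect to a partition `(I, J)` of `Fin N` (given `I ∪ J = univ`). -/
def matricize {N M : ℕ} (A : (Fin N → Fin M) → ℝ) (I J : Finset (Fin N))
    (hU : I ∪ J = Finset.univ) :
    Matrix ({n // n ∈ I} → Fin M) ({n // n ∈ J} → Fin M) ℝ :=
  Matrix.of fun u v => A fun n =>
    if h : n ∈ I then u ⟨n, h⟩
    else v ⟨n, by
      have hn : n ∈ I ∪ J := by rw [hU]; exact Finset.mem_univ n
      exact (Finset.mem_union.mp hn).resolve_left h⟩

/-- The index in `Fin (4 * n)` of position `i` inside the `t`-th block of size `n`. -/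
def blockIdx {n : ℕ} (t : Fin 4) (i : Fin n) : Fin (4 * n) :=
  ⟨t.val * n + i.val, by
    have h1 : i.val < n := i.isLt
    have h2 : t.val ≤ 3 := Nat.lt_succ_iff.mp t.isLt
    calc t.val * n + i.val < t.val * n + n := by omega
      _ = (t.val + 1) * n := by ring
      _ ≤ 4 * n := Nat.mul_le_mul_right n (by omega)⟩

/-- Fourth tensor power of an order-`n` tensor: an order-`4n` tensor. -/
def tpow4 {n M : ℕ} (T : (Fin n → Fin M) → ℝ) : (Fin (4 * n) → Fin M) → ℝ :=
  fun d => ∏ t : Fin 4, T (fun i => d (blockIdx t i))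

/-- Recast an order-`n` tensor as an order-`m` tensor along an equality `n = m`. -/
def castT {n m M : ℕ} (h : n = m) (T : (Fin n → Fin M) → ℝ) : (Fin m → Fin M) → ℝ :=
  fun d => T (fun i => d (Fin.cast h i))

theorem four_mul_pow (L : ℕ) (hL : 1 ≤ L) : 4 * 4 ^ (L - 1) = 4 ^ L := by
  obtain ⟨K, rfl⟩ := Nat.exists_eq_add_of_le hL
  rw [show 1 + K - 1 = K from by omega, pow_add, pow_one]

/-- The hidden tensors `φ^{l,γ}` of a deep convolutional arithmetic circuit, where
`φ^{0,α}` is the order-1 tensor given by `a0 α`, and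
`φ^{l+1,γ} = ∑ α, a l γ α • (φ^{l,α})^{⊗4}`  (so `a l` plays the role of `a^{l+1}`). -/
def phi (M : ℕ) (r : ℕ → ℕ) (a0 : Fin (r 0) → Fin M → ℝ)
    (a : (l : ℕ) → Fin (r (l + 1)) → Fin (r l) → ℝ) :
    (l : ℕ) → Fin (r l) → (Fin (4 ^ l) → Fin M) → ℝ
  | 0, γ => fun d => a0 γ (d ⟨0, by norm_num⟩)
  | (l + 1), γ => fun d => ∑ α : Fin (r l), a l γ α *
      castT (show 4 * 4 ^ l = 4 ^ (l + 1) by rw [pow_succ]; ring)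
        (tpow4 (phi M r a0 a l α)) d

/-- The coefficient tensor of a deep convolutional arithmetic circuit:
`A = ∑ α, aL α • (φ^{L-1,α})^{⊗4}`, of order `N = 4^L`. -/
def deepA (L M : ℕ) (hL : 1 ≤ L) (r : ℕ → ℕ) (a0 : Fin (r 0) → Fin M → ℝ)
    (a : (l : ℕ) → Fin (r (l + 1)) → Fin (r l) → ℝ)
    (aL : Fin (r (L - 1)) → ℝ) : (Fin (4 ^ L) → Fin M) → ℝ :=
  castT (four_mul_pow L hL)
    (fun d => ∑ α : Fin (r (L - 1)), aL α * tpow4 (phi M r a0 a (L - 1) α) d)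

/-- `inducedCard I l k` is the cardinality of the induced set `I_{l,k}`: the number of
`m ∈ [4^l]` (zero-based) such that `k·4^l + m ∈ I`. -/
def inducedCard {N : ℕ} (I : Finset (Fin N)) (l k : ℕ) : ℕ :=
  (I.filter (fun n => k * 4 ^ l ≤ n.val ∧ n.val < (k + 1) * 4 ^ l)).card

/-- The Euclidean space of all weights of the deep network: `a^{0,α}` for `α ∈ [r₀]`,
the matrices `a^l ∈ ℝ^{r_l × r_{l-1}}` for `l = 1,…,L-1`, and `a^L ∈ ℝ^{r_{L-1}}`. -/
abbrev WeightSpace (L M : ℕ) (r : ℕ → ℕ) : Type :=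
  (Fin (r 0) → Fin M → ℝ) ×
    ((l : Fin (L - 1)) → Fin (r (l.val + 1)) → Fin (r l.val) → ℝ) ×
    (Fin (r (L - 1)) → ℝ)

/-- Extend the finitely many middle-layer weight matrices to all levels
(levels `≥ L-1` are never used by the coefficient tensor of an `L`-layer network). -/
def extendMid (L : ℕ) (r : ℕ → ℕ)
    (a : (l : Fin (L - 1)) → Fin (r (l.val + 1)) → Fin (r l.val) → ℝ) :
    (l : ℕ) → Fin (r (l + 1)) → Fin (r l) → ℝ :=
  fun l => if h : l < L - 1 then a ⟨l, h⟩ else fun _ _ => 0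

/-- The deep convolutional arithmetic circuit coefficient tensor as a function of the
weight vector. -/
def deepAw (L M : ℕ) (hL : 1 ≤ L) (r : ℕ → ℕ) (w : WeightSpace L M r) :
    (Fin (4 ^ L) → Fin M) → ℝ :=
  deepA L M hL r w.1 (extendMid L r w.2.1) w.2.2


open MeasureTheory Set

noncomputable section ShapeStuff

/-- Shapes of iterated product/pi spaces over ℝ. -/
inductive Shp where
  | pt : Shp
  | pr : Shp → Shp → Shp
  | pI : (n : ℕ) → (Fin n → Shp) → Shp

/-- The space associated to a shape. -/
def Spc : Shp → Type
  | .pt => ℝ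
  | .pr a b => Spc a × Spc b
  | .pI n s => ∀ i : Fin n, Spc (s i)

/-- The canonical measurable structure. -/
instance msp : (sh : Shp) → MeasurableSpace (Spc sh)
  | .pt => (inferInstance : MeasurableSpace ℝ)
  | .pr a b => @Prod.instMeasurableSpace _ _ (msp a) (msp b)
  | .pI n s => @MeasurableSpace.pi _ _ (fun i => msp (s i))

/-- The canonical (Lebesgue-like) measure. -/
def vol : (sh : Shp) → Measure (Spc sh)
  | .pt => (volume : Measure ℝ)
  | .pr a b => (vol a).prod (vol b)
  | .pI n s => Measure.pi (fun i => vol (s i))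

theorem szf : ∀ sh : Shp, SigmaFinite (vol sh)
  | .pt => inferInstanceAs (SigmaFinite (volume : Measure ℝ))
  | .pr a b =>
      have := szf a; have := szf b
      inferInstanceAs (SigmaFinite ((vol a).prod (vol b)))
  | .pI n s =>
      have := fun i => szf (s i)
      inferInstanceAs (SigmaFinite (Measure.pi (fun i => vol (s i))))

/-- Size of a shape, for well-founded recursion. -/
def sz : Shp → ℕ
  | .pt => 1
  | .pr a b => 1 + sz a + sz b
  | .pI n s => 1 + ∑ i, sz (s i)

theorem one_le_sz : ∀ sh, 1 ≤ sz sh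
  | .pt => le_refl _
  | .pr _ _ => by simp [sz]; omega
  | .pI _ _ => by simp [sz]

/-- Coordinate functionals on a shaped space. -/
def cds : (sh : Shp) → Set (Spc sh → ℝ)
  | .pt => {id}
  | .pr a b => (fun g => fun x => g x.1) '' cds a ∪ (fun g => fun x => g x.2) '' cds b
  | .pI n s => ⋃ i, (fun g => fun x => g (x i)) '' cds (s i)

/-- Polynomial functions on a shaped space. -/
def Ply (sh : Shp) : Subalgebra ℝ (Spc sh → ℝ) := Algebra.adjoin ℝ (cds sh)

theorem cds_meas : ∀ sh, ∀ g ∈ cds sh, Measurable g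
  | .pt => by rintro g rfl; exact measurable_id
  | .pr a b => by
      rintro g (⟨g', hg', rfl⟩ | ⟨g', hg', rfl⟩)
      · exact (cds_meas a g' hg').comp measurable_fst
      · exact (cds_meas b g' hg').comp measurable_snd
  | .pI n s => by
      rintro g hg
      simp only [cds, Set.mem_iUnion] at hg
      obtain ⟨i, g', hg', rfl⟩ := hg
      exact (cds_meas (s i) g' hg').comp (measurable_pi_apply i)

theorem ply_meas {sh : Shp} {f : Spc sh → ℝ} (hf : f ∈ Ply sh) : Measurable f := by
  induction hf using Algebra.adjoin_induction with
  | mem g hg => exact cds_meas sh g hg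
  | algebraMap r => exact measurable_const
  | add _ _ _ _ h1 h2 => exact h1.add h2
  | mul _ _ _ _ h1 h2 => exact h1.mul h2

end ShapeStuff
noncomputable section NullStuff
open MeasureTheory Set

theorem sectL {a b : Shp} {f : Spc (Shp.pr a b) → ℝ} (hf : f ∈ Ply (Shp.pr a b))
    (y : Spc b) : (fun x => f (x, y)) ∈ Ply a := by
  induction hf using Algebra.adjoin_induction with
  | mem g hg =>
    rcases hg with ⟨g', hg', rfl⟩ | ⟨g', hg', rfl⟩
    · exact Algebra.subset_adjoin hg'
    · exact Subalgebra.algebraMap_mem _ (g' y)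
  | algebraMap r => exact Subalgebra.algebraMap_mem _ r
  | add _ _ _ _ h1 h2 => exact add_mem h1 h2
  | mul _ _ _ _ h1 h2 => exact mul_mem h1 h2

theorem sectR {a b : Shp} {f : Spc (Shp.pr a b) → ℝ} (hf : f ∈ Ply (Shp.pr a b))
    (x : Spc a) : (fun y => f (x, y)) ∈ Ply b := by
  induction hf using Algebra.adjoin_induction with
  | mem g hg =>
    rcases hg with ⟨g', hg', rfl⟩ | ⟨g', hg', rfl⟩
    · exact Subalgebra.algebraMap_mem _ (g' x)
    · exact Algebra.subset_adjoin hg'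
  | algebraMap r => exact Subalgebra.algebraMap_mem _ r
  | add _ _ _ _ h1 h2 => exact add_mem h1 h2
  | mul _ _ _ _ h1 h2 => exact mul_mem h1 h2

theorem sectC1 {n : ℕ} {s : Fin (n + 1) → Shp} {f : Spc (Shp.pI (n + 1) s) → ℝ}
    (hf : f ∈ Ply (Shp.pI (n + 1) s)) (y : ∀ j : Fin n, Spc (s j.succ)) :
    (fun x : Spc (s 0) => f (Fin.cons (α := fun i => Spc (s i)) x y)) ∈ Ply (s 0) := by
  induction hf using Algebra.adjoin_induction with
  | mem g hg =>
    simp only [cds, Set.mem_iUnion] at hg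
    obtain ⟨i, g', hg', rfl⟩ := hg
    induction i using Fin.cases with
    | zero => simp only [Fin.cons_zero]; exact Algebra.subset_adjoin hg'
    | succ j => simp only [Fin.cons_succ]; exact Subalgebra.algebraMap_mem _ (g' (y j))
  | algebraMap r => exact Subalgebra.algebraMap_mem _ r
  | add _ _ _ _ h1 h2 => exact add_mem h1 h2
  | mul _ _ _ _ h1 h2 => exact mul_mem h1 h2

theorem sectC2 {n : ℕ} {s : Fin (n + 1) → Shp} {f : Spc (Shp.pI (n + 1) s) → ℝ}
    (hf : f ∈ Ply (Shp.pI (n + 1) s)) (x : Spc (s 0)) :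
    (fun y : Spc (Shp.pI n (fun j => s j.succ)) =>
      f (Fin.cons (α := fun i => Spc (s i)) x y)) ∈ Ply (Shp.pI n (fun j => s j.succ)) := by
  induction hf using Algebra.adjoin_induction with
  | mem g hg =>
    simp only [cds, Set.mem_iUnion] at hg
    obtain ⟨i, g', hg', rfl⟩ := hg
    induction i using Fin.cases with
    | zero => simp only [Fin.cons_zero]; exact Subalgebra.algebraMap_mem _ (g' x)
    | succ j =>
      simp only [Fin.cons_succ]
      exact Algebra.subset_adjoin (Set.mem_iUnion.2 ⟨j, g', hg', rfl⟩)
  | algebraMap r => exact Subalgebra.algebraMap_mem _ r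
  | add _ _ _ _ h1 h2 => exact add_mem h1 h2
  | mul _ _ _ _ h1 h2 => exact mul_mem h1 h2

theorem meas_cons {n : ℕ} {s : Fin (n + 1) → Shp} :
    Measurable (fun p : Spc (s 0) × (∀ j : Fin n, Spc (s j.succ)) =>
      (Fin.cons (α := fun i => Spc (s i)) p.1 p.2)) := by
  refine measurable_pi_lambda _ fun i => ?_
  induction i using Fin.cases with
  | zero => simpa only [Fin.cons_zero] using measurable_fst
  | succ j =>
    simp only [Fin.cons_succ]
    exact (measurable_pi_apply j).comp measurable_snd

theorem vol_pi_cons (n : ℕ) (s : Fin (n + 1) → Shp) :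
    Measure.map (fun p : Spc (s 0) × (∀ j : Fin n, Spc (s j.succ)) =>
        (Fin.cons (α := fun i => Spc (s i)) p.1 p.2 : ∀ i, Spc (s i)))
      ((vol (s 0)).prod (Measure.pi fun j => vol (s j.succ)))
      = Measure.pi (fun i => vol (s i)) := by
  haveI := fun i => szf (s i)
  haveI : SigmaFinite (Measure.pi fun j : Fin n => vol (s j.succ)) := inferInstance
  refine (Measure.pi_eq (μ := fun i => vol (s i)) fun t ht => ?_).symm
  rw [Measure.map_apply meas_cons (MeasurableSet.univ_pi ht)]
  have hpre : (fun p : Spc (s 0) × (∀ j : Fin n, Spc (s j.succ)) =>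
      (Fin.cons (α := fun i => Spc (s i)) p.1 p.2 : ∀ i, Spc (s i))) ⁻¹' Set.pi Set.univ t
      = (t 0) ×ˢ Set.pi Set.univ (fun j : Fin n => t j.succ) := by
    ext ⟨x, y⟩
    simp only [Set.mem_preimage, Set.mem_pi, Set.mem_univ, forall_true_left, Set.mem_prod,
      Fin.forall_fin_succ, Fin.cons_zero, Fin.cons_succ]
  rw [hpre, Measure.prod_prod, Measure.pi_pi, Fin.prod_univ_succ]

end NullStuff
noncomputable section MainNull
open MeasureTheory Set

theorem ply_pt_eval {f : Spc Shp.pt → ℝ} (hf : f ∈ Ply Shp.pt) :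
    ∃ p : Polynomial ℝ, ∀ x : ℝ, f x = Polynomial.eval x p := by
  have hf' : f ∈ Algebra.adjoin ℝ ({id} : Set (ℝ → ℝ)) := hf
  rw [Algebra.adjoin_singleton_eq_range_aeval] at hf'
  obtain ⟨p, hp⟩ := hf'
  refine ⟨p, fun x => ?_⟩
  have h2 := Polynomial.aeval_algHom_apply (Pi.evalAlgHom ℝ (fun _ : ℝ => ℝ) x)
    (id : ℝ → ℝ) p
  simp only [Pi.evalAlgHom_apply, id_eq] at h2
  calc f x = (Polynomial.aeval (id : ℝ → ℝ)) p x := by rw [← hp]; rfl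
    _ = Polynomial.aeval x p := h2.symm
    _ = Polynomial.eval x p := by
        rw [Polynomial.aeval_def, Algebra.algebraMap_self]
        rfl

theorem ply_null : ∀ (k : ℕ) (sh : Shp), sz sh ≤ k → ∀ f : Spc sh → ℝ, f ∈ Ply sh →
    ∀ w₀ : Spc sh, f w₀ ≠ 0 → vol sh {x | f x = 0} = 0 := by
  intro k
  induction k with
  | zero => exact fun sh hsz => absurd (le_trans (one_le_sz sh) hsz) (by norm_num)
  | succ k ih =>
    rintro (_ | ⟨a, b⟩ | ⟨n, s⟩) hsz f hf w₀ hw₀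
    · -- point case
      obtain ⟨p, hp⟩ := ply_pt_eval hf
      have hp0 : p ≠ 0 := by
        rintro rfl
        exact hw₀ ((hp w₀).trans Polynomial.eval_zero)
      have hfin : Set.Finite {x : ℝ | f x = 0} := by
        refine Set.Finite.subset (Polynomial.finite_setOf_isRoot hp0) fun x hx => ?_
        simpa [Polynomial.IsRoot, ← hp x] using hx
      have hv : vol Shp.pt = (volume : Measure ℝ) := rfl
      rw [hv]
      exact hfin.measure_zero _
    · -- product case
      haveI := szf a; haveI := szf b
      simp only [sz] at hsz
      have hfm : Measurable f := ply_meas hf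
      have hZ : MeasurableSet {x : Spc (Shp.pr a b) | f x = 0} :=
        hfm (measurableSet_singleton 0)
      show (vol a).prod (vol b) {x : Spc a × Spc b | f x = 0} = 0
      refine (Measure.measure_prod_null hZ).mpr ?_
      have hN : vol a {x : Spc a | f (x, w₀.2) = 0} = 0 :=
        ih a (by omega) _ (sectL hf w₀.2) w₀.1 hw₀
      filter_upwards [(measure_eq_zero_iff_ae_notMem (μ := vol a)).1 hN] with x hx
      have : Prod.mk x ⁻¹' {p : Spc (Shp.pr a b) | f p = 0} = {y : Spc b | f (x, y) = 0} := rfl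
      show vol b {y : Spc b | f (x, y) = 0} = 0
      exact ih b (by omega) _ (sectR hf x) w₀.2 hx
    · -- pi case
      cases n with
      | zero =>
        have : {x : Spc (Shp.pI 0 s) | f x = 0} = ∅ := by
          ext x
          have hx : x = w₀ := funext fun i => i.elim0
          simp [hx, hw₀]
        rw [this]
        exact measure_empty
      | succ n =>
        haveI := szf (s 0)
        haveI : ∀ j : Fin n, SigmaFinite (vol (s j.succ)) := fun j => szf (s j.succ)
        haveI : SigmaFinite (Measure.pi fun j : Fin n => vol (s j.succ)) := inferInstance
        simp only [sz, Fin.sum_univ_succ] at hsz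
        have h1 := one_le_sz (s 0)
        have hfm : Measurable f := ply_meas hf
        have hZ : MeasurableSet {x : Spc (Shp.pI (n + 1) s) | f x = 0} :=
          hfm (measurableSet_singleton 0)
        have hZ' : MeasurableSet {x : ∀ i, Spc (s i) | f x = 0} := hZ
        show Measure.pi (fun i => vol (s i)) {x : ∀ i, Spc (s i) | f x = 0} = 0
        rw [← vol_pi_cons n s]
        rw [Measure.map_apply meas_cons hZ']
        refine (Measure.measure_prod_null (hZ'.preimage meas_cons)).mpr ?_
        have hN : vol (s 0) {x : Spc (s 0) |
            f (Fin.cons (α := fun i => Spc (s i)) x (Fin.tail w₀)) = 0} = 0 := by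
          refine ih (s 0) (by omega) _ (sectC1 hf (Fin.tail w₀)) (w₀ 0) ?_
          rw [show (Fin.cons (α := fun i => Spc (s i)) (w₀ 0) (Fin.tail w₀) : ∀ i, Spc (s i)) = w₀ from Fin.cons_self_tail (α := fun i => Spc (s i)) w₀]
          exact hw₀
        filter_upwards [(measure_eq_zero_iff_ae_notMem (μ := vol (s 0))).1 hN] with x hx
        have hsz' : sz (Shp.pI n fun j => s j.succ) ≤ k := by
          simp only [sz]; omega
        show (Measure.pi fun j : Fin n => vol (s j.succ))
            {y : Spc (Shp.pI n fun j => s j.succ) |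
              f (Fin.cons (α := fun i => Spc (s i)) x y) = 0} = 0
        exact ih _ hsz' _ (sectC2 hf x) (Fin.tail w₀) hx

end MainNull
noncomputable section LinAlg
open Matrix Module Submodule

theorem exists_sel {ι V : Type*} [Fintype ι] [AddCommGroup V] [Module ℝ V]
    [FiniteDimensional ℝ V] (g : ι → V) (k : ℕ)
    (h : Module.finrank ℝ (Submodule.span ℝ (Set.range g)) = k) :
    ∃ sel : Fin k → ι, LinearIndependent ℝ (fun i => g (sel i)) := by
  obtain ⟨b, hbsub, hbspan, hbind⟩ := exists_linearIndependent ℝ (Set.range g)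
  haveI : Finite b := hbind.finite
  haveI : Fintype b := Fintype.ofFinite _
  have hcard : Fintype.card b = k := by
    rw [← Set.toFinset_card, ← finrank_span_set_eq_card hbind, hbspan, h]
  let e : Fin k ≃ b := (Fintype.equivFinOfCardEq hcard).symm
  choose selfn hsel using fun x : b => (hbsub x.2 : (x : V) ∈ Set.range g)
  refine ⟨fun i => selfn (e i), ?_⟩
  have heq : (fun i => g (selfn (e i))) = (fun x : b => (x : V)) ∘ e := by
    funext i
    simp [hsel]
  rw [heq]
  exact hbind.comp e e.injective

theorem le_rank_of_det {m' n' : Type*} [Fintype m'] [Fintype n'] [DecidableEq m']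
    [DecidableEq n'] {A : Matrix m' n' ℝ} {k : ℕ} (u : Fin k → m') (v : Fin k → n')
    (h : (A.submatrix u v).det ≠ 0) : k ≤ A.rank := by
  have hid : A.submatrix u v =
      ((1 : Matrix m' m' ℝ).submatrix u id) * A * ((1 : Matrix n' n' ℝ).submatrix id v) := by
    ext i j
    simp [Matrix.mul_apply, Matrix.submatrix_apply, Matrix.one_apply, Finset.sum_ite_eq,
      Finset.sum_ite_eq', ite_mul, mul_ite]
  have hunit : IsUnit (A.submatrix u v) :=
    (Matrix.isUnit_iff_isUnit_det _).2 (isUnit_iff_ne_zero.2 h)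
  have hr : (A.submatrix u v).rank = k := by
    rw [Matrix.rank_of_isUnit _ hunit, Fintype.card_fin]
  calc k = (A.submatrix u v).rank := hr.symm
    _ ≤ A.rank := by
        rw [hid]
        exact le_trans (Matrix.rank_mul_le_left _ _) (Matrix.rank_mul_le_right _ _)

theorem exists_minor {m' n' : Type*} [Fintype m'] [Fintype n'] [DecidableEq m']
    [DecidableEq n'] (A : Matrix m' n' ℝ) :
    ∃ u : Fin A.rank → m', ∃ v : Fin A.rank → n', (A.submatrix u v).det ≠ 0 := by
  have hcols : Module.finrank ℝ (Submodule.span ℝ (Set.range Aᵀ)) = A.rank :=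
    (Matrix.rank_eq_finrank_span_cols A).symm
  obtain ⟨v, hv⟩ := exists_sel Aᵀ A.rank hcols
  set B := A.submatrix id v with hB
  have hBT : Bᵀ = fun i => Aᵀ (v i) := by
    funext i j
    rfl
  have hrB : B.rank = A.rank := by
    rw [Matrix.rank_eq_finrank_span_cols B, show B.col = Bᵀ from rfl, hBT, finrank_span_eq_card hv, Fintype.card_fin]
  have hrows : Module.finrank ℝ (Submodule.span ℝ (Set.range B)) = A.rank := by
    have := Matrix.rank_eq_finrank_span_row B; rw [hrB] at this; exact this.symm
  obtain ⟨u, hu⟩ := exists_sel B A.rank hrows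
  refine ⟨u, v, ?_⟩
  have hli : LinearIndependent ℝ (fun i => (A.submatrix u v) i) := by
    have : (fun i => (A.submatrix u v) i) = fun i => B (u i) := by
      funext i j
      rfl
    rw [this]
    exact hu
  have hunit := Matrix.linearIndependent_rows_iff_isUnit.mp hli
  exact ((Matrix.isUnit_iff_isUnit_det _).1 hunit).ne_zero

end LinAlg
noncomputable section App
open MeasureTheory

/-- The shape whose space is `WeightSpace L M r`. -/
def shW (L M : ℕ) (r : ℕ → ℕ) : Shp :=
  .pr (.pI (r 0) fun _ => .pI M fun _ => .pt)
    (.pr (.pI (L - 1) fun l => .pI (r (l.val + 1)) fun _ => .pI (r l.val) fun _ => .pt)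
      (.pI (r (L - 1)) fun _ => .pt))

theorem ply_const {sh : Shp} (c : ℝ) : (fun _ : Spc sh => c) ∈ Ply sh :=
  Subalgebra.algebraMap_mem _ c

theorem ply_mul {sh : Shp} {F G : Spc sh → ℝ} (hF : F ∈ Ply sh) (hG : G ∈ Ply sh) :
    (fun x => F x * G x) ∈ Ply sh := mul_mem hF hG

theorem ply_sum {sh : Shp} {ι : Type*} (t : Finset ι) (F : ι → Spc sh → ℝ)
    (h : ∀ i ∈ t, F i ∈ Ply sh) : (fun x => ∑ i ∈ t, F i x) ∈ Ply sh := by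
  have : (fun x => ∑ i ∈ t, F i x) = ∑ i ∈ t, F i := by
    funext x
    simp [Finset.sum_apply]
  rw [this]
  exact Subalgebra.sum_mem _ h

theorem ply_prod {sh : Shp} {ι : Type*} (t : Finset ι) (F : ι → Spc sh → ℝ)
    (h : ∀ i ∈ t, F i ∈ Ply sh) : (fun x => ∏ i ∈ t, F i x) ∈ Ply sh := by
  have : (fun x => ∏ i ∈ t, F i x) = ∏ i ∈ t, F i := by
    funext x
    simp [Finset.prod_apply]
  rw [this]
  exact Subalgebra.prod_mem _ h

theorem mem0 {L M : ℕ} {r : ℕ → ℕ} (α : Fin (r 0)) (i : Fin M) :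
    (fun w : Spc (shW L M r) => w.1 α i) ∈ Ply (shW L M r) := by
  apply Algebra.subset_adjoin
  refine Set.mem_union_left _ ⟨fun x => x α i, ?_, rfl⟩
  exact Set.mem_iUnion.2 ⟨α, fun x => x i, Set.mem_iUnion.2 ⟨i, id, rfl, rfl⟩, rfl⟩

theorem memMid {L M : ℕ} {r : ℕ → ℕ} (l : Fin (L - 1)) (γ : Fin (r (l.val + 1)))
    (β : Fin (r l.val)) :
    (fun w : Spc (shW L M r) => w.2.1 l γ β) ∈ Ply (shW L M r) := by
  apply Algebra.subset_adjoin
  refine Set.mem_union_right _ ⟨fun x => x.1 l γ β, Set.mem_union_left _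
    ⟨fun x => x l γ β, ?_, rfl⟩, rfl⟩
  exact Set.mem_iUnion.2 ⟨l, fun x => x γ β,
    Set.mem_iUnion.2 ⟨γ, fun x => x β, Set.mem_iUnion.2 ⟨β, id, rfl, rfl⟩, rfl⟩, rfl⟩

theorem memLast {L M : ℕ} {r : ℕ → ℕ} (α : Fin (r (L - 1))) :
    (fun w : Spc (shW L M r) => w.2.2 α) ∈ Ply (shW L M r) := by
  apply Algebra.subset_adjoin
  refine Set.mem_union_right _ ⟨fun x => x.2 α, Set.mem_union_right _
    ⟨fun x => x α, ?_, rfl⟩, rfl⟩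
  exact Set.mem_iUnion.2 ⟨α, id, rfl, rfl⟩

theorem phi_mem (L M : ℕ) (r : ℕ → ℕ) (l : ℕ) (α : Fin (r l)) (d : Fin (4 ^ l) → Fin M) :
    (fun w : Spc (shW L M r) => phi M r w.1 (extendMid L r w.2.1) l α d)
      ∈ Ply (shW L M r) := by
  induction l with
  | zero =>
    simp only [phi]
    exact mem0 α (d ⟨0, by norm_num⟩)
  | succ l ih =>
    simp only [phi, castT, tpow4]
    refine ply_sum _ _ fun β _ => ply_mul ?_ (ply_prod _ _ fun t _ => ih β _)
    by_cases h : l < L - 1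
    · simp only [extendMid, h, ↓reduceDIte]
      exact memMid ⟨l, h⟩ α β
    · simp only [extendMid, h, ↓reduceDIte]
      exact ply_const 0

theorem entry_mem (L M : ℕ) (hL : 1 ≤ L) (r : ℕ → ℕ) (d : Fin (4 ^ L) → Fin M) :
    (fun w : Spc (shW L M r) => deepAw L M hL r w d) ∈ Ply (shW L M r) := by
  simp only [deepAw, deepA, castT, tpow4]
  exact ply_sum _ _ fun β _ => ply_mul (memLast β) (ply_prod _ _ fun t _ =>
    phi_mem L M r (L - 1) β _)

end App

theorem stmt4 (L M : ℕ) (hL : 1 ≤ L) (hM : 1 ≤ M) (r : ℕ → ℕ)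
    (hr : ∀ l, l < L → 1 ≤ r l)
    (I J : Finset (Fin (4 ^ L))) (hdisj : Disjoint I J) (hU : I ∪ J = Finset.univ)
    (rmax : ℕ)
    (hmax : IsGreatest {ρ : ℕ | ∃ w : WeightSpace L M r,
        (matricize (deepAw L M hL r w) I J hU).rank = ρ} rmax) :
    volume {w : WeightSpace L M r |
        (matricize (deepAw L M hL r w) I J hU).rank < rmax} = 0 := by
  obtain ⟨w₀, hw₀⟩ := hmax.1
  subst hw₀
  obtain ⟨u, v, hdet⟩ := exists_minor (matricize (deepAw L M hL r w₀) I J hU)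
  have hent : ∀ (p : {n // n ∈ I} → Fin M) (q : {n // n ∈ J} → Fin M),
      (fun w : Spc (shW L M r) => (matricize (deepAw L M hL r w) I J hU) p q)
        ∈ Ply (shW L M r) := by
    intro p q
    simp only [matricize, Matrix.of_apply]
    exact entry_mem L M hL r _
  have hF : (fun w : Spc (shW L M r) =>
      ((matricize (deepAw L M hL r w) I J hU).submatrix u v).det) ∈ Ply (shW L M r) := by
    have hrw : (fun w : Spc (shW L M r) =>
        ((matricize (deepAw L M hL r w) I J hU).submatrix u v).det)
        = fun w => ∑ σ : Equiv.Perm (Fin ((matricize (deepAw L M hL r w₀) I J hU).rank)),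
            ((Equiv.Perm.sign σ : ℤ) : ℝ) *
              ∏ i, (matricize (deepAw L M hL r w) I J hU) (u (σ i)) (v i) := by
      funext w
      rw [Matrix.det_apply]
      refine Finset.sum_congr rfl fun σ _ => ?_
      rw [Units.smul_def, zsmul_eq_mul]
      rfl
    rw [hrw]
    exact ply_sum _ _ fun σ _ => ply_mul (ply_const _) (ply_prod _ _ fun i _ => hent _ _)
  have hnull : vol (shW L M r) {w : Spc (shW L M r) |
      ((matricize (deepAw L M hL r w) I J hU).submatrix u v).det = 0} = 0 :=
    ply_null (sz (shW L M r)) (shW L M r) le_rfl _ hF w₀ hdet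
  have hsub : {w : WeightSpace L M r | (matricize (deepAw L M hL r w) I J hU).rank < (matricize (deepAw L M hL r w₀) I J hU).rank}
      ⊆ {w : Spc (shW L M r) |
          ((matricize (deepAw L M hL r w) I J hU).submatrix u v).det = 0} := by
    intro w hw
    by_contra hne
    exact absurd (le_rank_of_det u v hne) (not_le.2 hw)
  have hveq : (volume : Measure (WeightSpace L M r)) = vol (shW L M r) := rfl
  rw [hveq]
  exact measure_mono_null hsub hnull
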